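/- The polymer basis is finite: the set B_A of all unsplittable self-saturated polymers p : Fin m → ℕ is a finite set. (This is the Gordan/Hilbert-basis finiteness underlying the paper's claim that the set of polymers that can exist in locally stable configurations is finite.) -/

import Mathlib

/-- A polymer `p` (vector of monomer counts) is self-saturated if the net count of
every unstarred site type is nonnegative, i.e. `A · p ≥ 0`. -/
def SelfSaturated {m n : ℕ} (A : Matrix (Fin n) (Fin m) ℤ) (p : Fin m → ℕ) : Prop :=
  ∀ i : Fin n, 0 ≤ A.mulVec (fun j => (p j : ℤ)) i

/-- A nonzero self-saturated polymer is unsplittable if it cannot be written as the sum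
of two nonzero self-saturated polymers. -/
def Unsplittable {m n : ℕ} (A : Matrix (Fin n) (Fin m) ℤ) (p : Fin m → ℕ) : Prop :=
  p ≠ 0 ∧ SelfSaturated A p ∧
    ¬ ∃ q r : Fin m → ℕ, q ≠ 0 ∧ r ≠ 0 ∧ SelfSaturated A q ∧ SelfSaturated A r ∧ p = q + r

/-- The polymer basis is finite. -/
theorem stmt3 {m n : ℕ} (A : Matrix (Fin n) (Fin m) ℤ) :
    {p : Fin m → ℕ | Unsplittable A p}.Finite := by
  classical
  set S : Set (Fin m → ℕ) := {p | Unsplittable A p} with hS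
  -- the embedding into ℕ^(m ⊕ n)
  set φ : (Fin m → ℕ) → (Fin m ⊕ Fin n → ℕ) :=
    fun p => Sum.elim p (fun i => (A.mulVec (fun j => (p j : ℤ)) i).toNat) with hφ
  have hinj : Set.InjOn φ S := by
    intro p _ q _ h
    funext j
    have := congrFun h (Sum.inl j)
    simpa [φ] using this
  have hanti : IsAntichain (· ≤ ·) (φ '' S) := by
    rintro _ ⟨p, hp, rfl⟩ _ ⟨q, hq, rfl⟩ hne hle
    apply hne
    -- from φ p ≤ φ q deduce p ≤ q and A p ≤ A q
    obtain ⟨hq0, hqsat, hqns⟩ := hq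
    obtain ⟨hp0, hpsat, hpns⟩ := hp
    have hpq : ∀ j, p j ≤ q j := fun j => hle (Sum.inl j)
    have hA : ∀ i, A.mulVec (fun j => (p j : ℤ)) i ≤ A.mulVec (fun j => (q j : ℤ)) i := by
      intro i
      have h1 := hle (Sum.inr i)
      simp only [φ, Sum.elim_inr] at h1
      have h2 := hpsat i
      have h3 := hqsat i
      omega
    by_cases hpeq : p = q
    · subst hpeq; rfl
    exfalso
    refine hqns ⟨p, q - p, hp0, ?_, hpsat, ?_, ?_⟩
    · intro h0
      apply hpeq
      funext j
      have := congrFun h0 j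
      simp only [Pi.sub_apply, Pi.zero_apply] at this
      have h2 := hpq j
      omega
    · intro i
      have hcast : (fun j => (((q - p) j : ℕ) : ℤ)) =
          (fun j => (q j : ℤ)) - (fun j => (p j : ℤ)) := by
        funext j
        simp only [Pi.sub_apply]
        have := hpq j
        omega
      rw [hcast, Matrix.mulVec_sub]
      have := hA i
      simp only [Pi.sub_apply]
      omega
    · funext j
      simp only [Pi.add_apply, Pi.sub_apply]
      have := hpq j
      omega
  haveI : IsWellOrder ℕ (· < ·) := ⟨⟩
  have hpwo : (φ '' S).IsPWO :=
    Set.isPWO_of_wellQuasiOrderedLE (φ '' S)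
  have hfin : (φ '' S).Finite :=
    hanti.finite_of_partiallyWellOrderedOn hpwo
  exact (Set.Finite.of_finite_image hfin hinj)
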